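/- Let Z be a Banach space with a monotone Schauder basis (e_m), and for each m let X_m be the linear span of e₁, …, e_m. Then n(Z) ≥ limsup_{m→∞} n(X_m). -/
import Mathlib

set_option synthInstance.maxHeartbeats 1000000
set_option maxHeartbeats 1000000


open scoped ENNReal

noncomputable def vrad {X : Type*} [NormedAddCommGroup X] [NormedSpace ℝ X] (T : X →L[ℝ] X) : ℝ :=
  sSup {r : ℝ | ∃ x : X, ∃ f : X →L[ℝ] ℝ, ‖x‖ = 1 ∧ ‖f‖ = 1 ∧ f x = 1 ∧ r = |f (T x)|}

noncomputable def nindex (X : Type*) [NormedAddCommGroup X] [NormedSpace ℝ X] : ℝ :=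
  sInf {r : ℝ | ∃ T : X →L[ℝ] X, ‖T‖ = 1 ∧ r = vrad T}

section Aux

variable {X : Type*} [NormedAddCommGroup X] [NormedSpace ℝ X]

lemma vrad_bddAbove (T : X →L[ℝ] X) :
    BddAbove {r : ℝ | ∃ x : X, ∃ f : X →L[ℝ] ℝ, ‖x‖ = 1 ∧ ‖f‖ = 1 ∧ f x = 1 ∧ r = |f (T x)|} := by
  refine ⟨‖T‖, ?_⟩
  rintro r ⟨x, f, hx, hf, hfx, rfl⟩
  calc |f (T x)| = ‖f (T x)‖ := (Real.norm_eq_abs _).symm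
    _ ≤ ‖f‖ * ‖T x‖ := f.le_opNorm _
    _ ≤ ‖f‖ * (‖T‖ * ‖x‖) := by gcongr; exact T.le_opNorm _
    _ = ‖T‖ := by rw [hx, hf]; ring

lemma vrad_nonneg (T : X →L[ℝ] X) : 0 ≤ vrad T :=
  Real.sSup_nonneg (by rintro r ⟨x, f, hx, hf, hfx, rfl⟩; positivity)

lemma abs_le_vrad (T : X →L[ℝ] X) {x : X} {f : X →L[ℝ] ℝ}
    (hx : ‖x‖ = 1) (hf : ‖f‖ = 1) (hfx : f x = 1) : |f (T x)| ≤ vrad T :=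
  le_csSup (vrad_bddAbove T) ⟨x, f, hx, hf, hfx, rfl⟩

lemma vrad_le_one {T : X →L[ℝ] X} (hT : ‖T‖ = 1) : vrad T ≤ 1 := by
  refine Real.sSup_le ?_ zero_le_one
  rintro r ⟨x, f, hx, hf, hfx, rfl⟩
  calc |f (T x)| = ‖f (T x)‖ := (Real.norm_eq_abs _).symm
    _ ≤ ‖f‖ * ‖T x‖ := f.le_opNorm _
    _ ≤ ‖f‖ * (‖T‖ * ‖x‖) := by gcongr; exact T.le_opNorm _
    _ = 1 := by rw [hx, hf, hT]; ring

lemma nindex_bddBelow (X : Type*) [NormedAddCommGroup X] [NormedSpace ℝ X] :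
    BddBelow {r : ℝ | ∃ T : X →L[ℝ] X, ‖T‖ = 1 ∧ r = vrad T} :=
  ⟨0, by rintro r ⟨T, _, rfl⟩; exact vrad_nonneg T⟩

lemma nindex_nonneg (X : Type*) [NormedAddCommGroup X] [NormedSpace ℝ X] :
    0 ≤ nindex X :=
  Real.sInf_nonneg (by rintro r ⟨T, _, rfl⟩; exact vrad_nonneg T)

lemma nindex_le_one (X : Type*) [NormedAddCommGroup X] [NormedSpace ℝ X] :
    nindex X ≤ 1 := by
  by_cases h : {r : ℝ | ∃ T : X →L[ℝ] X, ‖T‖ = 1 ∧ r = vrad T}.Nonempty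
  · obtain ⟨r, T, hT, hr⟩ := h
    exact csInf_le_of_le (nindex_bddBelow X) ⟨T, hT, hr⟩ (hr ▸ vrad_le_one hT)
  · rw [Set.not_nonempty_iff_eq_empty] at h
    rw [nindex, h, Real.sInf_empty]
    norm_num

end Aux

section Key

variable {Z : Type*} [NormedAddCommGroup Z] [NormedSpace ℝ Z]

/-- The compression of `T` to the subspace `K`, using the projection `P`. -/
noncomputable def projComp (K : Submodule ℝ Z) (P : Z →L[ℝ] Z) (hP : ∀ z, P z ∈ K)
    (T : Z →L[ℝ] Z) : K →L[ℝ] K :=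
  (P.codRestrict K hP).comp (T.comp K.subtypeL)

lemma projComp_apply (K : Submodule ℝ Z) (P : Z →L[ℝ] Z) (hP : ∀ z, P z ∈ K)
    (T : Z →L[ℝ] Z) (x : K) : (projComp K P hP T x : Z) = P (T (x : Z)) := rfl

/-- Key step: if the compression of a norm-one operator `T` to `K` has norm at least `1 - ε`,
then `nindex K ≤ (1 - ε)⁻¹ * vrad T`. -/
lemma nindex_le_aux (K : Submodule ℝ Z) (P : Z →L[ℝ] Z) (hP : ∀ z, P z ∈ K)
    (hPnorm : ‖P‖ = 1) (hPfix : ∀ x ∈ K, P x = x)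
    (T : Z →L[ℝ] Z) (hT : ‖T‖ = 1) {ε : ℝ} (hε1 : ε < 1)
    (hS : 1 - ε ≤ ‖projComp K P hP T‖) :
    nindex ↥K ≤ (1 - ε)⁻¹ * vrad T := by
  set S := projComp K P hP T with hSdef
  have hεpos : (0 : ℝ) < 1 - ε := by linarith
  have hSpos : 0 < ‖S‖ := lt_of_lt_of_le hεpos hS
  set T' : K →L[ℝ] K := ‖S‖⁻¹ • S with hT'def
  have hT'le : ‖T'‖ ≤ 1 := by
    refine ContinuousLinearMap.opNorm_le_bound _ zero_le_one ?_
    intro y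
    have h1 : T' y = ‖S‖⁻¹ • S y := rfl
    rw [h1, norm_smul, norm_inv, Real.norm_eq_abs, abs_of_pos hSpos, one_mul]
    calc ‖S‖⁻¹ * ‖S y‖ ≤ ‖S‖⁻¹ * (‖S‖ * ‖y‖) := by
          gcongr
          exact S.le_opNorm y
      _ = ‖y‖ := by rw [← mul_assoc, inv_mul_cancel₀ hSpos.ne', one_mul]
  have hT'ge : 1 ≤ ‖T'‖ := by
    have hle : ‖S‖ ≤ ‖S‖ * ‖T'‖ := by
      refine ContinuousLinearMap.opNorm_le_bound _ (by positivity) ?_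
      intro y
      have h1 : S y = ‖S‖ • T' y := by
        have h2 : T' y = ‖S‖⁻¹ • S y := rfl
        rw [h2, smul_smul, mul_inv_cancel₀ hSpos.ne', one_smul]
      rw [h1, norm_smul, Real.norm_eq_abs, abs_of_pos hSpos, mul_assoc]
      gcongr
      exact T'.le_opNorm y
    nlinarith [hSpos]
  have hT'norm : ‖T'‖ = 1 := le_antisymm hT'le hT'ge
  have h1 : nindex ↥K ≤ vrad T' := csInf_le (nindex_bddBelow _) ⟨T', hT'norm, rfl⟩
  have h2 : vrad T' ≤ ‖S‖⁻¹ * vrad T := by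
    refine Real.sSup_le ?_ (mul_nonneg (by positivity) (vrad_nonneg T))
    rintro r ⟨x, f, hx, hf, hfx, rfl⟩
    have hcoe : ‖(x : Z)‖ = 1 := hx
    -- the extended functional
    set g : Z →L[ℝ] ℝ := f.comp (P.codRestrict K hP) with hgdef
    have hg_le : ‖g‖ ≤ 1 := by
      refine ContinuousLinearMap.opNorm_le_bound _ zero_le_one ?_
      intro z
      have : ‖g z‖ ≤ ‖f‖ * ‖P.codRestrict K hP z‖ := f.le_opNorm _
      have h2 : ‖P.codRestrict K hP z‖ = ‖P z‖ := rfl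
      have h3 : ‖P z‖ ≤ ‖P‖ * ‖z‖ := P.le_opNorm _
      rw [hf, h2] at this
      rw [hPnorm] at h3
      simpa using this.trans (by simpa using h3)
    have hPx : P.codRestrict K hP (x : Z) = x := by
      ext
      exact hPfix _ x.2
    have hgx : g (x : Z) = 1 := by
      rw [hgdef, ContinuousLinearMap.comp_apply, hPx, hfx]
    have hg_ge : 1 ≤ ‖g‖ := by
      have := g.unit_le_opNorm (x : Z) (le_of_eq hcoe)
      rwa [hgx, norm_one] at this
    have hgnorm : ‖g‖ = 1 := le_antisymm hg_le hg_ge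
    have hfS : f (S x) = g (T (x : Z)) := rfl
    have hle : |f (S x)| ≤ vrad T := by
      rw [hfS]
      exact abs_le_vrad T hcoe hgnorm hgx
    have : |f (T' x)| = ‖S‖⁻¹ * |f (S x)| := by
      rw [hT'def]
      simp only [ContinuousLinearMap.smul_apply, map_smul, smul_eq_mul, abs_mul, abs_inv]
      rw [abs_of_pos hSpos]
    rw [this]
    exact mul_le_mul_of_nonneg_left hle (by positivity)
  have h3 : ‖S‖⁻¹ * vrad T ≤ (1 - ε)⁻¹ * vrad T := by
    refine mul_le_mul_of_nonneg_right ?_ (vrad_nonneg T)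
    exact inv_anti₀ hεpos hS
  linarith

end Key

/-- If `Z` has a monotone Schauder basis `(e_m)` (with canonical norm-one
projections `P m` onto the span of `e_0, …, e_m`), then `n(Z) ≥ limsup_m n(X_m)` where `X_m`
is the span of the first basis vectors. -/
theorem limsup_nindex_span_le_of_monotone_basis {Z : Type*} [NormedAddCommGroup Z]
    [NormedSpace ℝ Z] [CompleteSpace Z]
    (e : ℕ → Z) (P : ℕ → Z →L[ℝ] Z)
    (hnorm : ∀ m, ‖P m‖ = 1)
    (hrange : ∀ m, Set.range (P m) = (Submodule.span ℝ (e '' {k | k ≤ m}) : Set Z))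
    (hfix : ∀ m, ∀ k ≤ m, P m (e k) = e k)
    (hzero : ∀ m k, m < k → P m (e k) = 0)
    (htendsto : ∀ z : Z, Filter.Tendsto (fun m => P m z) Filter.atTop (nhds z)) :
    Filter.limsup (fun m => nindex ↥(Submodule.span ℝ (e '' {k | k ≤ m}))) Filter.atTop ≤
      nindex Z := by
  classical
  set K : ℕ → Submodule ℝ Z := fun m => Submodule.span ℝ (e '' {k | k ≤ m}) with hK
  have hmem : ∀ m z, P m z ∈ K m := by
    intro m z
    have : P m z ∈ Set.range (P m) := ⟨z, rfl⟩
    rwa [hrange m] at this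
  have hPfix : ∀ m, ∀ x ∈ K m, P m x = x := by
    intro m x hx
    induction hx using Submodule.span_induction with
    | mem y hy => obtain ⟨k, hk, rfl⟩ := hy; exact hfix m k hk
    | zero => simp
    | add y z _ _ hy hz => rw [map_add, hy, hz]
    | smul c y _ hy => rw [map_smul, hy]
  have he0 : e 0 ≠ 0 := by
    intro h
    have hzeroP : ∀ z : Z, P 0 z = 0 := by
      intro z
      have hz := hmem 0 z
      have himg : e '' {k | k ≤ 0} ⊆ ({0} : Set Z) := by
        rintro _ ⟨k, hk, rfl⟩
        simp only [Set.mem_setOf_eq, Nat.le_zero] at hk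
        simp [hk, h]
      have : K 0 ≤ ⊥ := by
        rw [hK]
        refine Submodule.span_le.mpr ?_
        simpa using himg
      simpa using this hz
    have hP0 : P 0 = 0 := by ext z; simp [hzeroP]
    have h1 := hnorm 0
    rw [hP0] at h1
    simp at h1
  haveI : Nontrivial Z := ⟨e 0, 0, he0⟩
  -- the set defining nindex Z is nonempty
  have hZset : {r : ℝ | ∃ T : Z →L[ℝ] Z, ‖T‖ = 1 ∧ r = vrad T}.Nonempty :=
    ⟨vrad (ContinuousLinearMap.id ℝ Z), ContinuousLinearMap.id ℝ Z,
      ContinuousLinearMap.norm_id, rfl⟩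
  refine le_csInf hZset ?_
  rintro r ⟨T, hT, rfl⟩
  -- show limsup ≤ vrad T
  have cobdd : Filter.IsCoboundedUnder (· ≤ ·) Filter.atTop
      (fun m => nindex ↥(K m)) :=
    Filter.isCoboundedUnder_le_of_le Filter.atTop (x := 0) (fun m => nindex_nonneg _)
  refine le_of_forall_pos_le_add ?_
  intro ε' hε'
  -- choose ε
  set ε : ℝ := min (ε' / 2) (1 / 2) with hεdef
  have hεpos : 0 < ε := lt_min (by linarith) (by norm_num)
  have hε1 : ε < 1 := lt_of_le_of_lt (min_le_right _ _) (by norm_num)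
  have hεhalf : ε ≤ 1 / 2 := min_le_right _ _
  have hεε' : ε ≤ ε' / 2 := min_le_left _ _
  -- find x₀
  obtain ⟨x₀, hx₀norm, hx₀⟩ := T.exists_lt_apply_of_lt_opNorm (r := 1 - ε / 3)
    (by rw [hT]; linarith)
  -- eventually the compression has norm ≥ 1 - ε
  have hev1 : ∀ᶠ m in Filter.atTop, ‖P m x₀ - x₀‖ < ε / 3 := by
    have := Metric.tendsto_nhds.mp (htendsto x₀) (ε / 3) (by linarith)
    filter_upwards [this] with m hm
    rwa [dist_eq_norm] at hm
  have hev2 : ∀ᶠ m in Filter.atTop, ‖P m (T x₀) - T x₀‖ < ε / 3 := by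
    have := Metric.tendsto_nhds.mp (htendsto (T x₀)) (ε / 3) (by linarith)
    filter_upwards [this] with m hm
    rwa [dist_eq_norm] at hm
  have hev : ∀ᶠ m in Filter.atTop,
      nindex ↥(K m) ≤ (1 - ε)⁻¹ * vrad T := by
    filter_upwards [hev1, hev2] with m hm1 hm2
    refine nindex_le_aux (K m) (P m) (hmem m) (hnorm m) (hPfix m) T hT hε1 ?_
    -- show 1 - ε ≤ ‖projComp ...‖
    set S := projComp (K m) (P m) (hmem m) T with hSdef
    set x : K m := (P m).codRestrict (K m) (hmem m) x₀ with hxdef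
    have hxnorm : ‖x‖ ≤ 1 := by
      have h1 : ‖x‖ = ‖P m x₀‖ := rfl
      have h2 : ‖P m x₀‖ ≤ ‖P m‖ * ‖x₀‖ := (P m).le_opNorm _
      rw [hnorm m, one_mul] at h2
      rw [h1]
      exact h2.trans hx₀norm.le
    have hSx : (S x : Z) = P m (T (P m x₀)) := rfl
    have hbound : 1 - ε ≤ ‖S x‖ := by
      have hc : ‖(S x : Z)‖ = ‖S x‖ := rfl
      rw [← hc, hSx]
      -- ‖P m (T (P m x₀))‖ ≥ ‖P m (T x₀)‖ - ‖P m (T (P m x₀ - x₀))‖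
      have key : P m (T (P m x₀)) = P m (T x₀) + P m (T (P m x₀ - x₀)) := by
        have habel : x₀ + (P m x₀ - x₀) = P m x₀ := by abel
        rw [← map_add, ← map_add, habel]
      have hsmall : ‖P m (T (P m x₀ - x₀))‖ < ε / 3 := by
        have h1 : ‖P m (T (P m x₀ - x₀))‖ ≤ ‖P m‖ * ‖T (P m x₀ - x₀)‖ := (P m).le_opNorm _
        have h2 : ‖T (P m x₀ - x₀)‖ ≤ ‖T‖ * ‖P m x₀ - x₀‖ := T.le_opNorm _
        rw [hnorm m, one_mul] at h1
        rw [hT, one_mul] at h2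
        exact lt_of_le_of_lt (h1.trans h2) hm1
      have hbig : 1 - 2 * ε / 3 < ‖P m (T x₀)‖ := by
        have := norm_sub_norm_le (P m (T x₀)) (T x₀)
        have h3 : ‖T x₀‖ - ‖P m (T x₀)‖ ≤ ‖P m (T x₀) - T x₀‖ := by
          have := norm_sub_norm_le (T x₀) (P m (T x₀))
          rwa [norm_sub_rev] at this
        linarith
      calc 1 - ε ≤ ‖P m (T x₀)‖ - ε / 3 := by linarith
        _ ≤ ‖P m (T x₀) + P m (T (P m x₀ - x₀))‖ := by
            have h5 : ‖P m (T x₀)‖ ≤ ‖P m (T x₀) + P m (T (P m x₀ - x₀))‖ +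
                ‖P m (T (P m x₀ - x₀))‖ := by
              calc ‖P m (T x₀)‖
                  = ‖(P m (T x₀) + P m (T (P m x₀ - x₀))) - P m (T (P m x₀ - x₀))‖ := by
                    congr 1; abel
                _ ≤ ‖P m (T x₀) + P m (T (P m x₀ - x₀))‖ + ‖P m (T (P m x₀ - x₀))‖ :=
                    norm_sub_le _ _
            linarith
        _ = ‖P m (T (P m x₀))‖ := by rw [← key]
    have := S.unit_le_opNorm x hxnorm
    linarith
  have hlimsup : Filter.limsup (fun m => nindex ↥(K m)) Filter.atTop ≤ (1 - ε)⁻¹ * vrad T :=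
    Filter.limsup_le_of_le cobdd hev
  have hv0 : 0 ≤ vrad T := vrad_nonneg T
  have hv1 : vrad T ≤ 1 := vrad_le_one hT
  have hfinal : (1 - ε)⁻¹ * vrad T ≤ vrad T + ε' := by
    have h1ε : (0 : ℝ) < 1 - ε := by linarith
    rw [inv_mul_le_iff₀ h1ε]
    nlinarith
  exact hlimsup.trans hfinal
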